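/- Let K ⊆ V be a nonempty cone and 𝒻 ⊆ F̂(K) a family such that −∞ < ζ_p(co(⋃_{F ∈ 𝒻} F)) < +∞. Then ζ_p(K ∩ co(⋃_{F ∈ 𝒻} F)) = inf{ζ_p(K ∩ F) : F ∈ 𝒻} = inf{ζ_p(F) : F ∈ 𝒻}; that is, the nonconvex problem over K ∩ co(⋃𝒻) decomposes into the family of subproblems COP(K ∩ F), F ∈ 𝒻, each equivalent to its convex reformulation COP(F). -/
import Mathlib


open RealInnerProductSpace

variable {V : Type*} [NormedAddCommGroup V] [InnerProductSpace ℝ V]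

/-- A (not necessarily convex or closed) cone: closed under nonnegative scaling. -/
def IsCone (C : Set V) : Prop := ∀ X ∈ C, ∀ l : ℝ, 0 ≤ l → l • X ∈ C

/-- The optimal value `ζ_p(C) = inf {⟨Q, X⟩ : X ∈ C, ⟨H, X⟩ = 1}` in `[-∞, +∞]`;
it equals `+∞` when the feasible set is empty. -/
noncomputable def zetaP (Q H : V) (C : Set V) : EReal :=
  sInf ((fun X => ((⟪Q, X⟫ : ℝ) : EReal)) '' {X | X ∈ C ∧ ⟪H, X⟫ = 1})

/-- `F̂(K)`: the family of all convex cones `J ⊆ co K` with `co (K ∩ J) = J`. -/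
def Fhat (K : Set V) : Set (Set V) :=
  {J | Convex ℝ J ∧ IsCone J ∧ J ⊆ convexHull ℝ K ∧ convexHull ℝ (K ∩ J) = J}



lemma zetaP_anti (Q H : V) {C D : Set V} (h : C ⊆ D) : zetaP Q H D ≤ zetaP Q H C :=
  sInf_le_sInf (Set.image_mono (fun x hx => ⟨h hx.1, hx.2⟩))

lemma zetaP_le (Q H : V) {C : Set V} {X : V} (hX : X ∈ C) (hHX : ⟪H, X⟫ = 1) :
    zetaP Q H C ≤ ((⟪Q, X⟫ : ℝ) : EReal) :=
  sInf_le ⟨X, ⟨hX, hHX⟩, rfl⟩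

lemma smul_mem_hull {C : Set V} (hC : IsCone C) {X : V} (hX : X ∈ convexHull ℝ C)
    {l : ℝ} (hl : 0 < l) : l • X ∈ convexHull ℝ C := by
  have hsub : C ⊆ (l • LinearMap.id (R := ℝ) (M := V)) ⁻¹' (convexHull ℝ C) := fun c hc =>
    subset_convexHull ℝ C (hC c hc l hl.le)
  have hconv := (convex_convexHull ℝ C).linear_preimage (l • LinearMap.id (R := ℝ) (M := V))
  exact convexHull_min hsub hconv hX

lemma add_mem_hull {C : Set V} (hC : IsCone C) {X Y : V}
    (hX : X ∈ convexHull ℝ C) (hY : Y ∈ convexHull ℝ C) : X + Y ∈ convexHull ℝ C := by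
  have hmid : (2⁻¹ : ℝ) • X + (2⁻¹ : ℝ) • Y ∈ convexHull ℝ C :=
    (convex_convexHull ℝ C) hX hY (by norm_num) (by norm_num) (by norm_num)
  have := smul_mem_hull hC hmid (l := 2) (by norm_num)
  rwa [smul_add, smul_smul, smul_smul, show (2 : ℝ) * 2⁻¹ = 1 by norm_num, one_smul, one_smul] at this

lemma ray_bot (Q H : V) {C : Set V} (hC : IsCone C)
    {X0 D : V} (h0 : X0 ∈ convexHull ℝ C) (hH0 : ⟪H, X0⟫ = 1)
    (hD : D ∈ convexHull ℝ C) (hHD : ⟪H, D⟫ = 0) (hQD : ⟪Q, D⟫ < 0) :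
    zetaP Q H (convexHull ℝ C) = ⊥ := by
  have key : ∀ M : ℝ, ∃ a ∈ ((fun X => ((⟪Q, X⟫ : ℝ) : EReal)) ''
      {X | X ∈ convexHull ℝ C ∧ ⟪H, X⟫ = 1}), a < (M : EReal) := by
    intro M
    obtain ⟨n, hn⟩ := exists_nat_gt ((⟪Q, X0⟫ - M) / (-⟪Q, D⟫))
    set l : ℝ := (n : ℝ) + 1 with hl
    have hlpos : 0 < l := by positivity
    have hmem : X0 + l • D ∈ convexHull ℝ C :=
      add_mem_hull hC h0 (smul_mem_hull hC hD hlpos)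
    have hfeas : ⟪H, X0 + l • D⟫ = 1 := by
      rw [inner_add_right, inner_smul_right, hHD]; simpa using hH0
    have hval : ⟪Q, X0 + l • D⟫ < M := by
      rw [inner_add_right, inner_smul_right]
      have h1 : ⟪Q, X0⟫ - M < (n : ℝ) * (-⟪Q, D⟫) :=
        (div_lt_iff₀ (by linarith)).mp hn
      have h2 : l * ⟪Q, D⟫ < (n : ℝ) * ⟪Q, D⟫ := by
        have : (n : ℝ) < l := by simp [hl]
        exact mul_lt_mul_of_neg_right this hQD
      nlinarith
    exact ⟨_, ⟨X0 + l • D, ⟨hmem, hfeas⟩, rfl⟩, by simpa using (EReal.coe_lt_coe_iff.mpr hval)⟩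
  rw [zetaP, sInf_eq_bot]
  intro b hb
  induction b using EReal.rec with
  | bot => exact absurd hb (lt_irrefl _)
  | coe M => exact key M
  | top =>
    obtain ⟨a, ha, hlt⟩ := key 0
    exact ⟨a, ha, lt_of_lt_of_le hlt le_top⟩

lemma zetaP_hull_eq (Q H : V) {C : Set V} (hC : IsCone C)
    (hbot : ⊥ < zetaP Q H (convexHull ℝ C)) :
    zetaP Q H (convexHull ℝ C) = zetaP Q H C := by
  refine le_antisymm (zetaP_anti Q H (subset_convexHull ℝ C)) ?_
  rw [zetaP]
  refine le_sInf ?_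
  rintro a ⟨X, ⟨hXhull, hHX⟩, rfl⟩
  have hX := hXhull
  rw [convexHull_eq] at hX
  obtain ⟨ι, t, w, z, hw0, hw1, hz, hXeq⟩ := hX
  rw [Finset.centerMass_eq_of_sum_1 _ _ hw1] at hXeq
  obtain ⟨Y, hYdef⟩ : ∃ Y : ι → V, Y = fun i => w i • z i := ⟨_, rfl⟩
  have hXeq' : ∑ i ∈ t, Y i = X := by rw [hYdef]; exact hXeq
  have hYC : ∀ i ∈ t, Y i ∈ C := by
    intro i hi; rw [hYdef]; exact hC (z i) (hz i hi) (w i) (hw0 i hi)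
  have hhsum : ∑ i ∈ t, ⟪H, Y i⟫ = 1 := by rw [← inner_sum, hXeq', hHX]
  have hqsum : ∑ i ∈ t, ⟪Q, Y i⟫ = ⟪Q, X⟫ := by rw [← inner_sum, hXeq']
  have hpos : ∃ j ∈ t, 0 < ⟪H, Y j⟫ := by
    by_contra hcon
    push_neg at hcon
    have : ∑ i ∈ t, ⟪H, Y i⟫ ≤ 0 := Finset.sum_nonpos hcon
    linarith
  obtain ⟨j0, hj0, hj0pos⟩ := hpos
  have hsne : (t.filter (fun i => 0 < ⟪H, Y i⟫)).Nonempty :=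
    ⟨j0, Finset.mem_filter.mpr ⟨hj0, hj0pos⟩⟩
  obtain ⟨j, hjs, hjmin⟩ :=
    Finset.exists_min_image (t.filter (fun i => 0 < ⟪H, Y i⟫))
      (fun i => ⟪Q, Y i⟫ / ⟪H, Y i⟫) hsne
  have hjt : j ∈ t := (Finset.mem_filter.mp hjs).1
  have hjpos : 0 < ⟪H, Y j⟫ := (Finset.mem_filter.mp hjs).2
  have hZC : (⟪H, Y j⟫)⁻¹ • Y j ∈ C := hC (Y j) (hYC j hjt) _ (inv_nonneg.mpr hjpos.le)
  have hZH : ⟪H, (⟪H, Y j⟫)⁻¹ • Y j⟫ = 1 := by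
    rw [inner_smul_right]; field_simp
  have hZQ : ⟪Q, (⟪H, Y j⟫)⁻¹ • Y j⟫ = ⟪Q, Y j⟫ / ⟪H, Y j⟫ := by
    rw [inner_smul_right]; ring
  have key : ∀ i ∈ t, ⟪Q, Y j⟫ / ⟪H, Y j⟫ * ⟪H, Y i⟫ ≤ ⟪Q, Y i⟫ := by
    intro i hit
    rcases lt_trichotomy (⟪H, Y i⟫) 0 with hneg | hzero | hposi
    · by_contra hlt
      push_neg at hlt
      have hDmem : ⟪H, Y j⟫ • Y i + (-⟪H, Y i⟫) • Y j ∈ convexHull ℝ C := by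
        refine add_mem_hull hC (subset_convexHull ℝ C ?_) (subset_convexHull ℝ C ?_)
        · exact hC (Y i) (hYC i hit) _ hjpos.le
        · exact hC (Y j) (hYC j hjt) _ (by linarith)
      have hDH : ⟪H, ⟪H, Y j⟫ • Y i + (-⟪H, Y i⟫) • Y j⟫ = 0 := by
        rw [inner_add_right, inner_smul_right, inner_smul_right]; ring
      have hDQ : ⟪Q, ⟪H, Y j⟫ • Y i + (-⟪H, Y i⟫) • Y j⟫ < 0 := by
        rw [inner_add_right, inner_smul_right, inner_smul_right]
        have h2 : ⟪H, Y j⟫ * ⟪Q, Y i⟫ < ⟪H, Y j⟫ * (⟪Q, Y j⟫ / ⟪H, Y j⟫ * ⟪H, Y i⟫) :=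
          (mul_lt_mul_iff_right₀ hjpos).mpr hlt
        have h3 : ⟪H, Y j⟫ * (⟪Q, Y j⟫ / ⟪H, Y j⟫ * ⟪H, Y i⟫) = ⟪Q, Y j⟫ * ⟪H, Y i⟫ := by
          field_simp
        nlinarith
      have := ray_bot Q H hC hXhull hHX hDmem hDH hDQ
      rw [this] at hbot
      exact absurd hbot (lt_irrefl _)
    · rw [hzero, mul_zero]
      by_contra hlt
      push_neg at hlt
      have := ray_bot Q H hC hXhull hHX (subset_convexHull ℝ C (hYC i hit)) hzero hlt
      rw [this] at hbot
      exact absurd hbot (lt_irrefl _)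
    · have his : i ∈ t.filter (fun i => 0 < ⟪H, Y i⟫) := Finset.mem_filter.mpr ⟨hit, hposi⟩
      exact (le_div_iff₀ hposi).mp (hjmin i his)
  have hsum : ⟪Q, Y j⟫ / ⟪H, Y j⟫ ≤ ⟪Q, X⟫ := by
    calc ⟪Q, Y j⟫ / ⟪H, Y j⟫ = ⟪Q, Y j⟫ / ⟪H, Y j⟫ * ∑ i ∈ t, ⟪H, Y i⟫ := by
          rw [hhsum, mul_one]
      _ = ∑ i ∈ t, ⟪Q, Y j⟫ / ⟪H, Y j⟫ * ⟪H, Y i⟫ := Finset.mul_sum _ _ _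
      _ ≤ ∑ i ∈ t, ⟪Q, Y i⟫ := Finset.sum_le_sum key
      _ = ⟪Q, X⟫ := hqsum
  calc zetaP Q H C ≤ ((⟪Q, (⟪H, Y j⟫)⁻¹ • Y j⟫ : ℝ) : EReal) := zetaP_le Q H hZC hZH
    _ = ((⟪Q, Y j⟫ / ⟪H, Y j⟫ : ℝ) : EReal) := by rw [hZQ]
    _ ≤ ((⟪Q, X⟫ : ℝ) : EReal) := EReal.coe_le_coe_iff.mpr hsum

lemma zetaP_sUnion (Q H : V) (𝓕 : Set (Set V)) :
    zetaP Q H (⋃₀ 𝓕) = ⨅ F ∈ 𝓕, zetaP Q H F := by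
  refine le_antisymm (le_iInf₂ fun F hF => zetaP_anti Q H (Set.subset_sUnion_of_mem hF)) ?_
  rw [zetaP]
  refine le_sInf ?_
  rintro a ⟨X, ⟨⟨F, hF, hXF⟩, hHX⟩, rfl⟩
  exact iInf₂_le_of_le F hF (zetaP_le Q H hXF hHX)

/-- Theorem 3.3 (iii): for a family `𝓕 ⊆ F̂(K)` with `-∞ < ζ_p(co (⋃ 𝓕)) < ∞`,
`ζ_p(K ∩ co (⋃ 𝓕)) = inf {ζ_p(K ∩ F) : F ∈ 𝓕} = inf {ζ_p(F) : F ∈ 𝓕}`. -/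
theorem stmt_14 [FiniteDimensional ℝ V] (Q H : V) (hH : H ≠ 0) (K : Set V)
    (hKne : K.Nonempty) (hKcone : IsCone K)
    (𝓕 : Set (Set V)) (h𝓕 : 𝓕 ⊆ Fhat K)
    (hfin : ⊥ < zetaP Q H (convexHull ℝ (⋃₀ 𝓕)) ∧ zetaP Q H (convexHull ℝ (⋃₀ 𝓕)) < ⊤) :
    zetaP Q H (K ∩ convexHull ℝ (⋃₀ 𝓕)) = ⨅ F ∈ 𝓕, zetaP Q H (K ∩ F) ∧
    (⨅ F ∈ 𝓕, zetaP Q H (K ∩ F)) = ⨅ F ∈ 𝓕, zetaP Q H F := by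
  have hUcone : IsCone (⋃₀ 𝓕) := by
    rintro X ⟨F, hF, hXF⟩ l hl
    exact ⟨F, hF, (h𝓕 hF).2.1 X hXF l hl⟩
  have h1 : zetaP Q H (convexHull ℝ (⋃₀ 𝓕)) = zetaP Q H (⋃₀ 𝓕) :=
    zetaP_hull_eq Q H hUcone hfin.1
  have h2 := zetaP_sUnion Q H 𝓕
  have hFsub : ∀ F ∈ 𝓕, F ⊆ convexHull ℝ (⋃₀ 𝓕) := fun F hF =>
    (Set.subset_sUnion_of_mem hF).trans (subset_convexHull ℝ _)
  have hKF : ∀ F ∈ 𝓕, zetaP Q H F = zetaP Q H (K ∩ F) := by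
    intro F hF
    obtain ⟨hconv, hcone, hsub, hhull⟩ := h𝓕 hF
    have hKFcone : IsCone (K ∩ F) := fun X hX l hl =>
      ⟨hKcone X hX.1 l hl, hcone X hX.2 l hl⟩
    have hbotF : ⊥ < zetaP Q H (convexHull ℝ (K ∩ F)) := by
      rw [hhull]
      exact lt_of_lt_of_le hfin.1 (zetaP_anti Q H (hFsub F hF))
    have heq := zetaP_hull_eq Q H hKFcone hbotF
    rw [hhull] at heq
    exact heq
  have hsecond : (⨅ F ∈ 𝓕, zetaP Q H (K ∩ F)) = ⨅ F ∈ 𝓕, zetaP Q H F :=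
    iInf_congr fun F => iInf_congr fun hF => (hKF F hF).symm
  refine ⟨le_antisymm ?_ ?_, hsecond⟩
  · refine le_iInf₂ fun F hF => zetaP_anti Q H ?_
    exact Set.inter_subset_inter_right K (hFsub F hF)
  · calc (⨅ F ∈ 𝓕, zetaP Q H (K ∩ F)) = ⨅ F ∈ 𝓕, zetaP Q H F := hsecond
      _ = zetaP Q H (⋃₀ 𝓕) := h2.symm
      _ = zetaP Q H (convexHull ℝ (⋃₀ 𝓕)) := h1.symm
      _ ≤ zetaP Q H (K ∩ convexHull ℝ (⋃₀ 𝓕)) := zetaP_anti Q H Set.inter_subset_right
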